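/- arXiv:2104.08868 — 7 statements merged into one kernel-verified Lean document; each statement's English description precedes it below -/
import Mathlib

section
/- Let K be a compact convex set in ℝ^n with nonempty interior, and suppose K is the convex hull of compact convex sets K₁,...,K_p with p ≤ n+1. For positive integers m₁,...,m_p, the covering functional satisfies Γ_{m₁+⋯+m_p}(K) ≤ max_{i∈[p]} (p−1+Γ_{m_i}(K_i))/p. -/
open Set Pointwise

/-- The covering functional: the smallest `γ ≥ 0` such that `K` can be
covered by `m` translates of `γ • K`. -/
noncomputable def coveringFunctional {n : ℕ} (K : Set (EuclideanSpace ℝ (Fin n))) (m : ℕ) : ℝ :=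
  sInf {γ : ℝ | 0 ≤ γ ∧ ∃ x : Fin m → EuclideanSpace ℝ (Fin n),
    K ⊆ ⋃ i, x i +ᵥ γ • K}

section Aux

variable {E : Type*} [AddCommGroup E] [Module ℝ E]

/-- Every point of the convex hull of a finite union of nonempty convex sets is a convex
combination of points, one from each set. -/
lemma exists_convex_combo {p : ℕ} (K : Fin p → Set E) (hKne : ∀ i, (K i).Nonempty)
    (hKconv : ∀ i, Convex ℝ (K i)) {x : E} (hx : x ∈ convexHull ℝ (⋃ i, K i)) :
    ∃ (l : Fin p → ℝ) (y : Fin p → E), (∀ i, 0 ≤ l i) ∧ ∑ i, l i = 1 ∧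
      (∀ i, y i ∈ K i) ∧ x = ∑ i, l i • y i := by
  classical
  set S : Set E := {x | ∃ (l : Fin p → ℝ) (y : Fin p → E), (∀ i, 0 ≤ l i) ∧ ∑ i, l i = 1 ∧
      (∀ i, y i ∈ K i) ∧ x = ∑ i, l i • y i} with hS
  suffices h : convexHull ℝ (⋃ i, K i) ⊆ S from h hx
  apply convexHull_min
  · rintro z hz
    simp only [mem_iUnion] at hz
    obtain ⟨i, hzi⟩ := hz
    refine ⟨fun j => if j = i then 1 else 0, fun j => if j = i then z else (hKne j).some,
      fun j => ?_, by simp, fun j => ?_, ?_⟩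
    · dsimp only; split <;> norm_num
    · dsimp only
      by_cases h : j = i
      · subst h; simpa using hzi
      · simpa [h] using (hKne j).some_mem
    · rw [Finset.sum_eq_single i]
      · simp
      · intro b _ hb; dsimp only; rw [if_neg hb, zero_smul]
      · intro h; exact absurd (Finset.mem_univ i) h
  · intro u hu v hv a b ha hb hab
    obtain ⟨l, y, hl0, hl1, hy, rfl⟩ := hu
    obtain ⟨l', y', hl'0, hl'1, hy', rfl⟩ := hv
    refine ⟨fun i => a * l i + b * l' i,
      fun i => if a * l i + b * l' i = 0 then y i else
        (a * l i / (a * l i + b * l' i)) • y i + (b * l' i / (a * l i + b * l' i)) • y' i,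
      fun i => ?_, ?_, fun i => ?_, ?_⟩
    · have := hl0 i; have := hl'0 i
      positivity
    · dsimp only
      rw [Finset.sum_add_distrib, ← Finset.mul_sum, ← Finset.mul_sum, hl1, hl'1, mul_one,
        mul_one, hab]
    · dsimp only
      by_cases h : a * l i + b * l' i = 0
      · rw [if_pos h]; exact hy i
      · rw [if_neg h]
        have hνpos : 0 ≤ a * l i + b * l' i := by
          have := hl0 i; have := hl'0 i; positivity
        exact hKconv i (hy i) (hy' i)
          (div_nonneg (mul_nonneg ha (hl0 i)) hνpos)
          (div_nonneg (mul_nonneg hb (hl'0 i)) hνpos)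
          (by field_simp)
    · rw [Finset.smul_sum, Finset.smul_sum, ← Finset.sum_add_distrib]
      refine Finset.sum_congr rfl fun i _ => ?_
      dsimp only
      by_cases h : a * l i + b * l' i = 0
      · have h1 : a * l i = 0 := by
          nlinarith [mul_nonneg ha (hl0 i), mul_nonneg hb (hl'0 i)]
        have h2 : b * l' i = 0 := by
          nlinarith [mul_nonneg ha (hl0 i), mul_nonneg hb (hl'0 i)]
        simp [if_pos h, h, smul_smul, h1, h2]
      · rw [if_neg h, smul_add, smul_smul, smul_smul, smul_smul, smul_smul,
          mul_comm (a * l i + b * l' i) (a * l i / (a * l i + b * l' i)),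
          div_mul_cancel₀ _ h,
          mul_comm (a * l i + b * l' i) (b * l' i / (a * l i + b * l' i)),
          div_mul_cancel₀ _ h]

/-- A nonnegative combination of points of a nonempty convex set `K` with total weight `t`
lies in `t • K`. -/
lemma sum_smul_mem_smul {ι : Type*} (s : Finset ι) {K : Set E} (hK : Convex ℝ K)
    (hne : K.Nonempty) {c : ι → ℝ} {z : ι → E} (hc : ∀ i ∈ s, 0 ≤ c i)
    (hz : ∀ i ∈ s, z i ∈ K) :
    ∑ i ∈ s, c i • z i ∈ (∑ i ∈ s, c i) • K := by
  have ht0 : 0 ≤ ∑ i ∈ s, c i := Finset.sum_nonneg hc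
  rcases eq_or_lt_of_le ht0 with h | h
  · have hall : ∀ i ∈ s, c i = 0 := (Finset.sum_eq_zero_iff_of_nonneg hc).1 h.symm
    have h2 : ∑ i ∈ s, c i • z i = 0 :=
      Finset.sum_eq_zero fun i hi => by rw [hall i hi, zero_smul]
    rw [h2, ← h, Set.zero_smul_set hne]
    exact Set.zero_mem_zero
  · refine ⟨∑ i ∈ s, (c i / (∑ i ∈ s, c i)) • z i,
      hK.sum_mem (fun i hi => div_nonneg (hc i hi) ht0)
        (by rw [← Finset.sum_div, div_self h.ne']) hz, ?_⟩
    dsimp only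
    rw [Finset.smul_sum]
    refine Finset.sum_congr rfl fun i hi => ?_
    rw [smul_smul, mul_comm, div_mul_cancel₀ _ h.ne']

end Aux

lemma coveringFunctional_nonneg {n : ℕ} (K : Set (EuclideanSpace ℝ (Fin n))) (m : ℕ) :
    0 ≤ coveringFunctional K m :=
  Real.sInf_nonneg fun _ hx => hx.1

lemma coveringFunctional_set_nonempty {n : ℕ} (K : Set (EuclideanSpace ℝ (Fin n))) {m : ℕ}
    (hm : 0 < m) :
    {γ : ℝ | 0 ≤ γ ∧ ∃ x : Fin m → EuclideanSpace ℝ (Fin n),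
      K ⊆ ⋃ i, x i +ᵥ γ • K}.Nonempty := by
  refine ⟨1, zero_le_one, fun _ => 0, ?_⟩
  intro y hy
  exact mem_iUnion.2 ⟨⟨0, hm⟩, by simpa using hy⟩

theorem covering_functional_convexHull_le_of_le {n p : ℕ} (hp : 0 < p) (hpn : p ≤ n + 1)
    (K : Fin p → Set (EuclideanSpace ℝ (Fin n)))
    (hKne : ∀ i, (K i).Nonempty) (hKc : ∀ i, IsCompact (K i)) (hKconv : ∀ i, Convex ℝ (K i))
    (hint : (interior (convexHull ℝ (⋃ i, K i))).Nonempty)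
    (m : Fin p → ℕ) (hm : ∀ i, 0 < m i) :
    coveringFunctional (convexHull ℝ (⋃ i, K i)) (∑ i, m i) ≤
      ⨆ i, ((p : ℝ) - 1 + coveringFunctional (K i) (m i)) / p := by
  classical
  set Kh : Set (EuclideanSpace ℝ (Fin n)) := convexHull ℝ (⋃ i, K i) with hKh
  have hKhconv : Convex ℝ Kh := convex_convexHull ℝ _
  have hsub : ∀ i, K i ⊆ Kh := fun i => (Set.subset_iUnion K i).trans (subset_convexHull ℝ _)
  set i₀ : Fin p := ⟨0, hp⟩
  obtain ⟨k₀, hk₀⟩ : Kh.Nonempty := ⟨(hKne i₀).some, hsub _ (hKne i₀).some_mem⟩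
  set γ : Fin p → ℝ := fun i => coveringFunctional (K i) (m i) with hγ
  have hγ0 : ∀ i, 0 ≤ γ i := fun i => coveringFunctional_nonneg _ _
  set Γ : ℝ := ⨆ i, ((p : ℝ) - 1 + γ i) / p with hΓ
  have hp1 : (1:ℝ) ≤ p := by exact_mod_cast hp
  have hpR : (0:ℝ) < p := by linarith
  have hΓ_le : ∀ i, ((p:ℝ) - 1 + γ i) / p ≤ Γ := by
    intro i
    rw [hΓ]
    exact le_ciSup (f := fun i : Fin p => ((p:ℝ) - 1 + γ i) / p)
      (Set.Finite.bddAbove (Set.finite_range _)) i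
  have hΓ0 : 0 ≤ Γ :=
    le_trans (show (0:ℝ) ≤ ((p:ℝ) - 1 + γ i₀) / p from
      div_nonneg (by linarith [hγ0 i₀]) hpR.le) (hΓ_le i₀)
  refine le_of_forall_pos_le_add fun ε hε => ?_
  -- pick near-optimal coverings of each `K i`
  have hpick : ∀ i : Fin p, ∃ g : ℝ, (0 ≤ g ∧ ∃ c : Fin (m i) → EuclideanSpace ℝ (Fin n),
      K i ⊆ ⋃ j, c j +ᵥ g • K i) ∧ g < γ i + ε := by
    intro i
    obtain ⟨g, hg, hglt⟩ := Real.lt_sInf_add_pos (coveringFunctional_set_nonempty (K i) (hm i)) hε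
    exact ⟨g, hg, hglt⟩
  choose γ' hγ'mem hγ'lt using hpick
  choose hγ'0 c hc using hγ'mem
  set s : Fin p → ℝ := fun i => ((p:ℝ) - 1 + γ' i) / p with hs
  have hs0 : ∀ i, 0 ≤ s i := fun i => div_nonneg (by linarith [hγ'0 i]) hpR.le
  have hslt : ∀ i, s i ≤ Γ + ε := by
    intro i
    calc s i ≤ (((p:ℝ) - 1 + γ i) + ε) / p := by
          show ((p:ℝ) - 1 + γ' i) / p ≤ (((p:ℝ) - 1 + γ i) + ε) / p
          exact (div_le_div_iff_of_pos_right hpR).2 (by linarith [hγ'lt i])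
      _ = ((p:ℝ) - 1 + γ i) / p + ε / p := by ring
      _ ≤ Γ + ε := add_le_add (hΓ_le i) (div_le_self hε.le hp1)
  -- the centers of the covering of `Kh`
  set d : (i : Fin p) → Fin (m i) → EuclideanSpace ℝ (Fin n) :=
    fun i j => (1 / (p:ℝ)) • c i j - (Γ + ε - s i) • k₀ with hd
  have e : (Σ i : Fin p, Fin (m i)) ≃ Fin (∑ i, m i) :=
    Fintype.equivFinOfCardEq (by simp)
  -- the covering of `Kh` by `∑ m` translates of `(Γ + ε) • Kh`
  have hcover : Kh ⊆ ⋃ t, (fun t => d (e.symm t).1 (e.symm t).2) t +ᵥ (Γ + ε) • Kh := by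
    intro z hz
    obtain ⟨l, y, hl0, hl1, hy, hz_eq⟩ := exists_convex_combo K hKne hKconv hz
    -- find a coordinate with weight at least 1/p
    have hex : ∃ i : Fin p, 1 / (p:ℝ) ≤ l i := by
      by_contra hcon
      push_neg at hcon
      have h1 : ∑ i, l i < ∑ _i : Fin p, 1 / (p:ℝ) :=
        Finset.sum_lt_sum_of_nonempty ⟨i₀, Finset.mem_univ i₀⟩ fun i _ => hcon i
      rw [hl1, Finset.sum_const, Finset.card_univ, Fintype.card_fin, nsmul_eq_mul,
        mul_one_div, div_self hpR.ne'] at h1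
      exact lt_irrefl 1 h1
    obtain ⟨i, hli⟩ := hex
    -- find the translate covering `y i`
    obtain ⟨j, hyj⟩ := mem_iUnion.1 (hc i (hy i))
    rw [Set.mem_vadd_set] at hyj
    obtain ⟨b, hb, hbe⟩ := hyj
    obtain ⟨w, hw, rfl⟩ := hb
    have hy_eq : y i = c i j + γ' i • w := by rw [← hbe]; rfl
    -- the modified weights
    set l' : Fin p → ℝ := fun j' => l j' - if j' = i then 1 / (p:ℝ) else 0 with hl'
    have hl'0 : ∀ j' ∈ Finset.univ, 0 ≤ l' j' := by
      intro j' _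
      by_cases h : j' = i
      · subst h; simp only [hl']; simp only [if_pos, if_true, eq_self_iff_true]; linarith
      · simp only [hl', if_neg h, sub_zero]; exact hl0 j'
    have hl'sum : ∑ j', l' j' = 1 - 1 / (p:ℝ) := by
      simp [hl', Finset.sum_sub_distrib, hl1]
    have hA : ∑ j', l' j' • y j' ∈ (1 - 1 / (p:ℝ)) • Kh := by
      rw [← hl'sum]
      exact sum_smul_mem_smul Finset.univ hKhconv ⟨k₀, hk₀⟩ hl'0
        fun j' _ => hsub j' (hy j')
    have hB : (γ' i / p) • w ∈ (γ' i / p) • Kh :=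
      Set.smul_mem_smul_set (hsub i hw)
    have hC : (Γ + ε - s i) • k₀ ∈ (Γ + ε - s i) • Kh :=
      Set.smul_mem_smul_set hk₀
    have hAsum : ∑ j', l' j' • y j' = (∑ j', l j' • y j') - (1 / (p:ℝ)) • y i := by
      simp [hl', sub_smul, Finset.sum_sub_distrib, ite_smul]
    have key : z - d i j = (∑ j', l' j' • y j') + (γ' i / p) • w + (Γ + ε - s i) • k₀ := by
      have hcij : c i j = y i - γ' i • w := by rw [hy_eq]; abel
      rw [hAsum, hz_eq]
      simp only [hd]
      rw [hcij]
      have : (γ' i / p) • w = (1 / (p:ℝ)) • (γ' i • w) := by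
        rw [smul_smul, one_div, div_eq_inv_mul]
      rw [this]
      rw [smul_sub]
      abel
    have hmem : z - d i j ∈ (Γ + ε) • Kh := by
      have htot : (1 - 1 / (p:ℝ)) + γ' i / p + (Γ + ε - s i) = Γ + ε := by
        have hsi : s i = ((p:ℝ) - 1 + γ' i) / p := rfl
        rw [hsi]
        field_simp
        ring
      have hsplit : (Γ + ε) • Kh =
          ((1 - 1 / (p:ℝ)) + γ' i / p) • Kh + (Γ + ε - s i) • Kh := by
        have h1p : 1 / (p:ℝ) ≤ 1 := by rw [div_le_one hpR]; exact hp1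
        have h2p := div_nonneg (hγ'0 i) hpR.le
        conv_lhs => rw [← htot]
        exact hKhconv.add_smul (by linarith) (by linarith [hslt i])
      have hsplit2 : ((1 - 1 / (p:ℝ)) + γ' i / p) • Kh =
          (1 - 1 / (p:ℝ)) • Kh + (γ' i / p) • Kh := by
        refine hKhconv.add_smul ?_ (div_nonneg (hγ'0 i) hpR.le)
        have : 1 / (p:ℝ) ≤ 1 := by rw [div_le_one hpR]; exact hp1
        linarith
      rw [key, hsplit, hsplit2]
      exact Set.add_mem_add (Set.add_mem_add hA hB) hC
    have hstep : z ∈ d i j +ᵥ (Γ + ε) • Kh := by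
      rw [Set.mem_vadd_set]
      exact ⟨z - d i j, hmem, by simp⟩
    have hgen : ∀ t : (Σ i' : Fin p, Fin (m i')), t = ⟨i, j⟩ →
        z ∈ d t.1 t.2 +ᵥ (Γ + ε) • Kh := by
      intro t ht; subst ht; exact hstep
    exact mem_iUnion.2 ⟨e ⟨i, j⟩, hgen _ (e.symm_apply_apply _)⟩
  -- conclude
  have hmemT : Γ + ε ∈ {γ : ℝ | 0 ≤ γ ∧ ∃ x : Fin (∑ i, m i) → EuclideanSpace ℝ (Fin n),
      Kh ⊆ ⋃ t, x t +ᵥ γ • Kh} :=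
    ⟨by linarith, fun t => d (e.symm t).1 (e.symm t).2, hcover⟩
  exact csInf_le ⟨0, fun x hx => hx.1⟩ hmemT
end

section
/- If K = conv(L ∪ M) is a convex body in ℝ^n, where L and M are nonempty compact convex sets, then for all positive integers m₁, m₂, Γ_{m₁+m₂}(K) ≤ max{(1+Γ_{m₁}(L))/2, (1+Γ_{m₂}(M))/2}. -/
open Set Pointwise

private lemma combo3 {n : ℕ} {K : Set (EuclideanSpace ℝ (Fin n))} (hK : Convex ℝ K)
    {a b c : ℝ} (ha : 0 ≤ a) (hb : 0 ≤ b) (hc : 0 ≤ c) (habc : a + b + c = 1)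
    {x y z : EuclideanSpace ℝ (Fin n)} (hx : x ∈ K) (hy : y ∈ K) (hz : z ∈ K) :
    a • x + b • y + c • z ∈ K := by
  have := hK.sum_mem (t := (Finset.univ : Finset (Fin 3))) (w := ![a, b, c]) (z := ![x, y, z])
    (by intro i _; fin_cases i <;> assumption)
    (by simp [Fin.sum_univ_three, habc])
    (by intro i _; fin_cases i <;> assumption)
  simpa [Fin.sum_univ_three] using this

private lemma half_mem_cover {n m : ℕ} {K L : Set (EuclideanSpace ℝ (Fin n))}
    (hK : Convex ℝ K) (hLK : L ⊆ K) {γ1 γ : ℝ} (hγ1 : 0 ≤ γ1)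
    (hγ : (1 + γ1) / 2 ≤ γ) {p : EuclideanSpace ℝ (Fin n)} (hp : p ∈ K)
    {x : Fin m → EuclideanSpace ℝ (Fin n)} (hcov : L ⊆ ⋃ i, x i +ᵥ γ1 • L)
    {l w : EuclideanSpace ℝ (Fin n)} (hl : l ∈ L) (hw : w ∈ K) :
    (1/2 : ℝ) • l + (1/2 : ℝ) • w ∈
      ⋃ i, ((1/2 : ℝ) • x i - (γ - (1 + γ1)/2) • p) +ᵥ γ • K := by
  have hγpos : 0 < γ := lt_of_lt_of_le (by linarith) hγ
  have hli := hcov hl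
  rw [mem_iUnion] at hli
  obtain ⟨i, hli⟩ := hli
  obtain ⟨l₀, ⟨l', hl', rfl⟩, rfl⟩ := hli
  refine mem_iUnion.2 ⟨i, ?_⟩
  set u : EuclideanSpace ℝ (Fin n) :=
    (γ1/(2*γ)) • l' + (1/(2*γ)) • w + ((γ - (1+γ1)/2)/γ) • p with hu_def
  have hu : u ∈ K := by
    refine combo3 hK ?_ ?_ ?_ ?_ (hLK hl') hw hp
    · positivity
    · positivity
    · apply div_nonneg (by linarith) hγpos.le
    · field_simp
      ring
  refine ⟨γ • u, ⟨u, hu, rfl⟩, ?_⟩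
  show ((1/2 : ℝ) • x i - (γ - (1 + γ1)/2) • p) + γ • u = _
  rw [hu_def]
  simp only [vadd_eq_add]
  match_scalars <;> (field_simp; try ring)

theorem covering_functional_convexHull_union {n : ℕ}
    (L M : Set (EuclideanSpace ℝ (Fin n)))
    (hLne : L.Nonempty) (hLc : IsCompact L) (hLconv : Convex ℝ L)
    (hMne : M.Nonempty) (hMc : IsCompact M) (hMconv : Convex ℝ M)
    (hint : (interior (convexHull ℝ (L ∪ M))).Nonempty)
    (m₁ m₂ : ℕ) (hm₁ : 0 < m₁) (hm₂ : 0 < m₂) :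
    coveringFunctional (convexHull ℝ (L ∪ M)) (m₁ + m₂) ≤
      max ((1 + coveringFunctional L m₁) / 2) ((1 + coveringFunctional M m₂) / 2) := by
  classical
  set K := convexHull ℝ (L ∪ M) with hK_def
  have hKconv : Convex ℝ K := convex_convexHull ℝ _
  have hLK : L ⊆ K := subset_union_left.trans (subset_convexHull ℝ _)
  have hMK : M ⊆ K := subset_union_right.trans (subset_convexHull ℝ _)
  obtain ⟨p, hp⟩ : K.Nonempty := hLne.mono hLK
  -- the defining sets
  set SL := {γ : ℝ | 0 ≤ γ ∧ ∃ x : Fin m₁ → EuclideanSpace ℝ (Fin n), L ⊆ ⋃ i, x i +ᵥ γ • L} with hSL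
  set SM := {γ : ℝ | 0 ≤ γ ∧ ∃ x : Fin m₂ → EuclideanSpace ℝ (Fin n), M ⊆ ⋃ i, x i +ᵥ γ • M} with hSM
  set SK := {γ : ℝ | 0 ≤ γ ∧ ∃ x : Fin (m₁ + m₂) → EuclideanSpace ℝ (Fin n), K ⊆ ⋃ i, x i +ᵥ γ • K} with hSK
  have hone : ∀ (m : ℕ) (S : Set (EuclideanSpace ℝ (Fin n))), 0 < m →
      (1 : ℝ) ∈ {γ : ℝ | 0 ≤ γ ∧ ∃ x : Fin m → EuclideanSpace ℝ (Fin n), S ⊆ ⋃ i, x i +ᵥ γ • S} := by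
    intro m S hm
    refine ⟨zero_le_one, fun _ => 0, fun s hs => ?_⟩
    exact mem_iUnion.2 ⟨⟨0, hm⟩, ⟨s, ⟨s, hs, one_smul ℝ s⟩, zero_vadd _ _⟩⟩
  have hSLne : SL.Nonempty := ⟨1, hone m₁ L hm₁⟩
  have hSMne : SM.Nonempty := ⟨1, hone m₂ M hm₂⟩
  have hSKne : SK.Nonempty := ⟨1, hone (m₁ + m₂) K (by omega)⟩
  have hSKbdd : BddBelow SK := ⟨0, fun γ hγ => hγ.1⟩
  have hCK : coveringFunctional K (m₁ + m₂) = sInf SK := rfl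
  have hCL : coveringFunctional L m₁ = sInf SL := rfl
  have hCM : coveringFunctional M m₂ = sInf SM := rfl
  rw [hCK, hCL, hCM, Real.sInf_le_iff hSKbdd hSKne]
  intro ε hε
  obtain ⟨γ1, hγ1S, hγ1lt⟩ := Real.lt_sInf_add_pos hSLne hε
  obtain ⟨γ2, hγ2S, hγ2lt⟩ := Real.lt_sInf_add_pos hSMne hε
  obtain ⟨hγ1nn, x, hxcov⟩ := hγ1S
  obtain ⟨hγ2nn, y, hycov⟩ := hγ2S
  set γ := max ((1 + γ1)/2) ((1 + γ2)/2) with hγ_def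
  have hγL : (1 + γ1)/2 ≤ γ := le_max_left _ _
  have hγM : (1 + γ2)/2 ≤ γ := le_max_right _ _
  refine ⟨γ, ⟨by positivity, ?_⟩, ?_⟩
  · -- the covering
    refine ⟨Fin.append (fun i => (1/2 : ℝ) • x i - (γ - (1 + γ1)/2) • p)
      (fun j => (1/2 : ℝ) • y j - (γ - (1 + γ2)/2) • p), ?_⟩
    intro q hq
    rw [hK_def, hLconv.convexHull_union hMconv hLne hMne, mem_convexJoin] at hq
    obtain ⟨l, hl, mm, hm, a, b, ha, hb, hab, rfl⟩ := hq
    rcases le_total b (1/2 : ℝ) with hb2 | hb2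
    · -- a ≥ 1/2, use L side
      have hwmem : ((2*a - 1) : ℝ) • l + ((2*b) : ℝ) • mm ∈ K :=
        hKconv (hLK hl) (hMK hm) (by linarith) (by linarith) (by linarith)
      have hmem := half_mem_cover hKconv hLK hγ1nn hγL hp hxcov hl hwmem
      have heq : a • l + b • mm =
          (1/2 : ℝ) • l + (1/2 : ℝ) • (((2*a - 1) : ℝ) • l + ((2*b) : ℝ) • mm) := by
        module
      rw [heq]
      rw [mem_iUnion] at hmem ⊢
      obtain ⟨i, hi⟩ := hmem
      exact ⟨Fin.castAdd m₂ i, by rwa [Fin.append_left]⟩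
    · -- b ≥ 1/2, use M side
      have hwmem : ((2*b - 1) : ℝ) • mm + ((2*a) : ℝ) • l ∈ K :=
        hKconv (hMK hm) (hLK hl) (by linarith) (by linarith) (by linarith)
      have hmem := half_mem_cover hKconv hMK hγ2nn hγM hp hycov hm hwmem
      have heq : a • l + b • mm =
          (1/2 : ℝ) • mm + (1/2 : ℝ) • (((2*b - 1) : ℝ) • mm + ((2*a) : ℝ) • l) := by
        match_scalars <;> linarith
      rw [heq]
      rw [mem_iUnion] at hmem ⊢
      obtain ⟨j, hj⟩ := hmem
      exact ⟨Fin.natAdd m₁ j, by rwa [Fin.append_right]⟩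
  · -- γ < max + ε
    have h1 : (1 + γ1)/2 < (1 + sInf SL)/2 + ε := by
      linarith
    have h2 : (1 + γ2)/2 < (1 + sInf SM)/2 + ε := by
      linarith
    exact max_lt (h1.trans_le (add_le_add_left (le_max_left _ _) ε))
      (h2.trans_le (add_le_add_left (le_max_right _ _) ε))
end

section
/- If a convex body K ⊆ ℝ^n is the convex hull of p line segments K₁,...,K_p, then Γ_{2p}(K) ≤ (2p−1)/(2p). -/
open Set Pointwise

theorem covering_functional_convexHull_segments {n p : ℕ} (hp : 0 < p)
    (a b : Fin p → EuclideanSpace ℝ (Fin n))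
    (K : Set (EuclideanSpace ℝ (Fin n)))
    (hK : K = convexHull ℝ (⋃ i, segment ℝ (a i) (b i)))
    (hKbody : (interior K).Nonempty) :
    coveringFunctional K (2 * p) ≤ (2 * (p : ℝ) - 1) / (2 * p) := by
  classical
  have hp' : (1 : ℝ) ≤ (p : ℝ) := by exact_mod_cast hp
  have h2p : (0 : ℝ) < 2 * p := by linarith
  set γ : ℝ := (2 * (p : ℝ) - 1) / (2 * p) with hγdef
  have hγpos : 0 < γ := div_pos (by linarith) h2p
  -- the 2p endpoints
  set v : Fin (2 * p) → EuclideanSpace ℝ (Fin n) := fun i =>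
    if h : (i : ℕ) < p then a ⟨i, h⟩ else b ⟨(i : ℕ) - p, by omega⟩ with hv
  -- K is the convex hull of the endpoints
  have hKv : K = convexHull ℝ (Set.range v) := by
    apply le_antisymm
    · rw [hK]
      apply convexHull_min _ (convex_convexHull ℝ _)
      apply Set.iUnion_subset
      intro i
      have ha : a i ∈ Set.range v := by
        refine ⟨⟨(i : ℕ), by omega⟩, ?_⟩
        simp only [hv]
        rw [dif_pos i.isLt]
      have hb : b i ∈ Set.range v := by
        refine ⟨⟨(i : ℕ) + p, by omega⟩, ?_⟩
        simp only [hv]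
        rw [dif_neg (by omega)]
        congr 1
        ext
        simp
      exact (convex_convexHull ℝ _).segment_subset
        (subset_convexHull ℝ _ ha) (subset_convexHull ℝ _ hb)
    · rw [hK]
      apply convexHull_mono
      rintro x ⟨i, rfl⟩
      simp only [hv]
      by_cases h : (i : ℕ) < p
      · rw [dif_pos h]
        exact Set.mem_iUnion.2 ⟨⟨(i : ℕ), h⟩, left_mem_segment ℝ _ _⟩
      · rw [dif_neg h]
        exact Set.mem_iUnion.2 ⟨⟨(i : ℕ) - p, by omega⟩, right_mem_segment ℝ _ _⟩
  -- the covering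
  have hmem : γ ∈ {γ : ℝ | 0 ≤ γ ∧ ∃ x : Fin (2 * p) → EuclideanSpace ℝ (Fin n), K ⊆ ⋃ i, x i +ᵥ γ • K} := by
    refine ⟨hγpos.le, fun i => (1 / (2 * (p:ℝ))) • v i, ?_⟩
    intro x hx
    rw [hKv, convexHull_range_eq_exists_affineCombination] at hx
    obtain ⟨s, w, hw₀, hw₁, hwx⟩ := hx
    -- extend the weights to all of Fin (2p)
    set μ : Fin (2 * p) → ℝ := fun i => if i ∈ s then w i else 0 with hμ
    have hμ₀ : ∀ i, 0 ≤ μ i := by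
      intro i; simp only [hμ]; split
      · exact hw₀ _ ‹_›
      · exact le_rfl
    have hμ₁ : ∑ i, μ i = 1 := by
      rw [hμ, Finset.sum_ite_mem, Finset.univ_inter, hw₁]
    have hμx : ∑ i, μ i • v i = x := by
      rw [← hwx, Finset.affineCombination_eq_linear_combination s v w hw₁]
      simp only [hμ, ite_smul, zero_smul, Finset.sum_ite_mem, Finset.univ_inter]
    -- pigeonhole: some weight is at least 1/(2p)
    have hcard : ∑ _i : Fin (2 * p), (1 / (2 * (p : ℝ))) / 1 ≤ ∑ i, μ i := by
      rw [Finset.sum_const, hμ₁]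
      simp only [Finset.card_univ, Fintype.card_fin, nsmul_eq_mul, div_one]
      rw [Nat.cast_mul]
      push_cast
      rw [mul_one_div, div_self (by positivity)]
    obtain ⟨j, -, hj⟩ := Finset.exists_le_of_sum_le (Finset.univ_nonempty_iff.2
      ⟨⟨0, by omega⟩⟩) hcard
    rw [div_one] at hj
    -- show x belongs to the j-th translate
    apply Set.mem_iUnion.2 ⟨j, ?_⟩
    rw [Set.mem_vadd_set_iff_neg_vadd_mem, Set.mem_smul_set_iff_inv_smul_mem₀ hγpos.ne']
    -- express the point as a center of mass
    set w' : Fin (2 * p) → ℝ := fun i => μ i - if i = j then 1 / (2 * (p:ℝ)) else 0 with hw'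
    have hw'₀ : ∀ i ∈ Finset.univ, 0 ≤ w' i := by
      intro i _
      simp only [hw']
      split
      · subst ‹i = j›; linarith
      · simpa using hμ₀ i
    have hw'sum : ∑ i, w' i = γ := by
      simp only [hw', Finset.sum_sub_distrib, hμ₁, Finset.sum_ite_eq' Finset.univ j,
        Finset.mem_univ, if_true, hγdef]
      field_simp
    have hsum_if : ∑ i, (if i = j then (1 / (2 * (p:ℝ))) else 0) • v i
        = (1 / (2 * (p:ℝ))) • v j := by
      simp [ite_smul]
    have key : Finset.univ.centerMass w' v = γ⁻¹ • (x - (1 / (2 * (p:ℝ))) • v j) := by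
      rw [Finset.centerMass, hw'sum]
      congr 1
      simp only [hw', sub_smul, Finset.sum_sub_distrib, hμx, hsum_if]
    have hvadd : -((1 / (2 * (p:ℝ))) • v j) +ᵥ x = x - (1 / (2 * (p:ℝ))) • v j := by
      rw [vadd_eq_add, neg_add_eq_sub]
    rw [hKv]
    show γ⁻¹ • (-((1 / (2 * (p:ℝ))) • v j) +ᵥ x) ∈ _
    rw [hvadd, ← key]
    exact Finset.centerMass_mem_convexHull _ hw'₀ (by rw [hw'sum]; exact hγpos)
      (fun i _ => Set.mem_range_self i)
  -- conclude via csInf_le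
  apply csInf_le _ hmem
  exact ⟨0, fun x hx => hx.1⟩
end

section
/- Let K be a convex body in ℝ^n and x, y ∈ ∂K. If x and y are not antipodal points of K, then there exists a nonzero vector d such that both x+d and y+d lie in the interior of K. -/
open Set Pointwise

/-- `a` and `b` are antipodal points of `X`: there are distinct parallel hyperplanes
through `a` and `b` such that `X` lies in the closed slab between them. -/
def AntipodalPair {n : ℕ} (X : Set (EuclideanSpace ℝ (Fin n)))
    (a b : EuclideanSpace ℝ (Fin n)) : Prop :=
  ∃ f : EuclideanSpace ℝ (Fin n) →ₗ[ℝ] ℝ, f ≠ 0 ∧ f a ≠ f b ∧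
    ∀ x ∈ X, min (f a) (f b) ≤ f x ∧ f x ≤ max (f a) (f b)

/-- A convex set with nonempty interior is contained in the closure of its interior. -/
lemma subset_closure_interior_of_convex {n : ℕ} {K : Set (EuclideanSpace ℝ (Fin n))}
    (hKconv : Convex ℝ K) (hint : (interior K).Nonempty) :
    K ⊆ closure (interior K) := by
  obtain ⟨z0, hz0⟩ := hint
  intro z hz
  have htend : Filter.Tendsto (fun t : ℝ => z + t • (z0 - z)) (nhdsWithin 0 (Set.Ioi 0))
      (nhds z) := by
    have : Filter.Tendsto (fun t : ℝ => z + t • (z0 - z)) (nhds 0)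
        (nhds (z + (0 : ℝ) • (z0 - z))) := by
      exact (continuous_const.add (continuous_id.smul continuous_const)).tendsto 0
    simpa using this.mono_left nhdsWithin_le_nhds
  refine mem_closure_of_tendsto htend ?_
  filter_upwards [Ioo_mem_nhdsGT_of_mem (by norm_num : (0:ℝ) ∈ Set.Ico 0 1)] with t ht
  exact hKconv.add_smul_sub_mem_interior hz hz0 ⟨ht.1, ht.2.le⟩

theorem illuminate_of_not_antipodal {n : ℕ} (K : Set (EuclideanSpace ℝ (Fin n)))
    (hKc : IsCompact K) (hKconv : Convex ℝ K) (hint : (interior K).Nonempty)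
    (x y : EuclideanSpace ℝ (Fin n)) (hx : x ∈ frontier K) (hy : y ∈ frontier K)
    (h : ¬ AntipodalPair K x y) :
    ∃ d : EuclideanSpace ℝ (Fin n), d ≠ 0 ∧ x + d ∈ interior K ∧ y + d ∈ interior K := by
  by_contra hc
  push_neg at hc
  have hxK : x ∈ K := hKc.isClosed.closure_eq ▸ frontier_subset_closure hx
  have hyK : y ∈ K := hKc.isClosed.closure_eq ▸ frontier_subset_closure hy
  have hxnotint : x ∉ interior K := fun hxi => hx.2 hxi
  set A : Set (EuclideanSpace ℝ (Fin n)) := (x + ·) ⁻¹' interior K with hA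
  set B : Set (EuclideanSpace ℝ (Fin n)) := (y + ·) ⁻¹' interior K with hB
  have hdisj : Disjoint A B := by
    rw [Set.disjoint_left]
    intro d hdA hdB
    have hd0 : d ≠ 0 := by
      rintro rfl
      exact hxnotint (by simpa [hA] using hdA)
    exact hc d hd0 hdA hdB
  have hAopen : IsOpen A := isOpen_interior.preimage (continuous_const.add continuous_id)
  have hBopen : IsOpen B := isOpen_interior.preimage (continuous_const.add continuous_id)
  obtain ⟨f, u, hfa, hfb⟩ :=
    geometric_hahn_banach_open_open (hKconv.interior.translate_preimage_right x) hAopen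
      (hKconv.interior.translate_preimage_right y) hBopen hdisj
  obtain ⟨z0, hz0⟩ := hint
  -- f is nonzero
  have hAne : (z0 - x) ∈ A := by simp [hA]; simpa using hz0
  have hBne : (z0 - y) ∈ B := by simp [hB]; simpa using hz0
  have hfne : f ≠ 0 := by
    intro h0
    have h1 := hfa _ hAne
    have h2 := hfb _ hBne
    rw [h0] at h1 h2
    simp at h1 h2
    linarith
  have hsub : K ⊆ closure (interior K) := subset_closure_interior_of_convex hKconv ⟨z0, hz0⟩
  -- upper bound: ∀ z ∈ K, f z ≤ u + f x
  have key1 : ∀ z ∈ K, f z ≤ u + f x := by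
    intro z hz
    have hcl : closure (interior K) ⊆ {w | f w ≤ u + f x} := by
      apply closure_minimal
      · intro w hw
        have hmem : (w - x) ∈ A := by simp [hA]; simpa using hw
        have := hfa _ hmem
        rw [map_sub] at this
        simp only [Set.mem_setOf_eq]
        linarith
      · exact isClosed_le f.continuous continuous_const
    exact hcl (hsub hz)
  have key2 : ∀ z ∈ K, u + f y ≤ f z := by
    intro z hz
    have hcl : closure (interior K) ⊆ {w | u + f y ≤ f w} := by
      apply closure_minimal
      · intro w hw
        have hmem : (w - y) ∈ B := by simp [hB]; simpa using hw
        have := hfb _ hmem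
        rw [map_sub] at this
        simp only [Set.mem_setOf_eq]
        linarith
      · exact isClosed_le continuous_const f.continuous
    exact hcl (hsub hz)
  have hu0 : u = 0 := le_antisymm (by have := key2 y hyK; linarith) (by have := key1 x hxK; linarith)
  subst hu0
  simp only [zero_add] at key1 key2
  have hyx : f y ≤ f x := key2 x hxK
  -- f x ≠ f y
  have hxy : f x ≠ f y := by
    intro heq
    -- f would be constant on K, hence on a ball inside interior K, hence zero
    obtain ⟨v, hv⟩ : ∃ v, f v ≠ 0 := by
      by_contra hv
      push_neg at hv
      exact hfne (by ext w; simpa using hv w)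
    have hv0 : v ≠ 0 := fun h0 => hv (by simp [h0])
    obtain ⟨ε, hε, hball⟩ := Metric.isOpen_iff.1 isOpen_interior z0 hz0
    set t : ℝ := ε / (2 * ‖v‖) with ht
    have hnv : (0:ℝ) < ‖v‖ := norm_pos_iff.2 hv0
    have ht0 : 0 < t := by positivity
    have hmem : z0 + t • v ∈ interior K := by
      apply hball
      rw [Metric.mem_ball, dist_eq_norm]
      simp only [add_sub_cancel_left, norm_smul, Real.norm_eq_abs, abs_of_pos ht0]
      have heq2 : ‖v‖ * t = ε / 2 := by rw [ht]; field_simp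
      rw [mul_comm, heq2]; linarith
    have h1 := key1 _ (interior_subset hmem)
    have h2 := key2 _ (interior_subset hmem)
    have h3 := key1 z0 (interior_subset hz0)
    have h4 := key2 z0 (interior_subset hz0)
    rw [map_add, map_smul] at h1 h2
    simp only [smul_eq_mul, heq] at h1 h2 h3 h4
    have hfz0 : f z0 = f y := le_antisymm h3 h4
    have : t * f v = 0 := by linarith
    rcases mul_eq_zero.1 this with h' | h'
    · exact absurd h' (ne_of_gt ht0)
    · exact hv h'
  exact h ⟨f.toLinearMap, fun h0 => hfne (ContinuousLinearMap.coe_injective (by exact_mod_cast h0)),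
    hxy, fun z hz => ⟨by simpa [min_eq_right hyx] using key2 z hz,
      by simpa [max_eq_left hyx] using key1 z hz⟩⟩
end

section
/- If K ⊆ ℝ³ is a three-dimensional simplex (convex hull of 4 affinely independent points a, b, c, d), then writing K = conv(conv{a,b} ∪ conv{c,d}) yields Γ₄(K) ≤ 3/4. -/
open Set Pointwise

lemma simplex_cover {E : Type*} [AddCommGroup E] [Module ℝ E] (v : Fin 4 → E) :
    convexHull ℝ (Set.range v) ⊆
      ⋃ i, ((1/4 : ℝ) • v i) +ᵥ (3/4 : ℝ) • convexHull ℝ (Set.range v) := by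
  intro p hp
  rw [convexHull_range_eq_exists_affineCombination] at hp
  obtain ⟨s, w, h0, h1, rfl⟩ := hp
  -- find i ∈ s with 1/4 ≤ w i
  have hne : s.Nonempty := by
    rcases Finset.eq_empty_or_nonempty s with h | h
    · simp [h] at h1
    · exact h
  have hex : ∃ i ∈ s, (1/4 : ℝ) ≤ w i := by
    by_contra h
    push_neg at h
    have hlt : ∑ j ∈ s, w j < ∑ j ∈ s, (1/4 : ℝ) :=
      Finset.sum_lt_sum_of_nonempty hne h
    have hcard : (s.card : ℝ) ≤ 4 := by
      have := Finset.card_le_univ s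
      simp only [Fintype.card_fin] at this
      exact_mod_cast this
    have : ∑ j ∈ s, (1/4 : ℝ) = (s.card : ℝ) * (1/4) := by
      simp [Finset.sum_const, mul_comm]
    rw [h1, this] at hlt
    nlinarith
  obtain ⟨i, hi, hwi⟩ := hex
  set u : Fin 4 → ℝ := fun j => (4/3) * (w j - if j = i then 1/4 else 0) with hu
  have hu0 : ∀ j ∈ s, 0 ≤ u j := by
    intro j hj
    rcases eq_or_ne j i with rfl | hji
    · simp [hu]; linarith
    · simp [hu, hji]; linarith [h0 j hj]
  have hite : ∑ j ∈ s, (if j = i then (1/4 : ℝ) else 0) = 1/4 := by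
    rw [Finset.sum_ite_eq' s i (fun _ => (1/4 : ℝ))]
    simp [hi]
  have hu1 : ∑ j ∈ s, u j = 1 := by
    simp only [hu, ← Finset.mul_sum, Finset.sum_sub_distrib, h1, hite]
    norm_num
  have hq : s.affineCombination ℝ v u ∈ convexHull ℝ (Set.range v) :=
    affineCombination_mem_convexHull hu0 hu1
  have hplin : s.affineCombination ℝ v w = ∑ j ∈ s, w j • v j :=
    s.affineCombination_eq_linear_combination v w h1
  have hqlin : s.affineCombination ℝ v u = ∑ j ∈ s, u j • v j :=
    s.affineCombination_eq_linear_combination v u hu1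
  have hkey : s.affineCombination ℝ v w =
      ((1/4 : ℝ) • v i) +ᵥ (3/4 : ℝ) • s.affineCombination ℝ v u := by
    rw [hplin, hqlin, vadd_eq_add, Finset.smul_sum]
    have : ∀ j ∈ s, (3/4 : ℝ) • (u j • v j) = w j • v j - (if j = i then (1/4:ℝ) else 0) • v j := by
      intro j hj
      rw [smul_smul, ← sub_smul]
      congr 1
      simp only [hu]
      ring
    rw [Finset.sum_congr rfl this, Finset.sum_sub_distrib]
    have : ∑ j ∈ s, (if j = i then (1/4:ℝ) else 0) • v j = (1/4 : ℝ) • v i := by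
      simp only [ite_smul, zero_smul]
      rw [Finset.sum_ite_eq' s i (fun j => (1/4 : ℝ) • v j)]
      simp [hi]
    rw [this]
    abel
  refine Set.mem_iUnion.2 ⟨i, ?_⟩
  rw [hkey]
  exact Set.vadd_mem_vadd_set (Set.smul_mem_smul_set hq)

theorem covering_functional_four_simplex
    (a b c d : EuclideanSpace ℝ (Fin 3))
    (hind : AffineIndependent ℝ ![a, b, c, d])
    (K : Set (EuclideanSpace ℝ (Fin 3)))
    (hK : K = convexHull ℝ {a, b, c, d}) :
    coveringFunctional K 4 ≤ 3 / 4 := by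
  have hrange : Set.range ![a, b, c, d] = {a, b, c, d} := by
    ext x
    simp only [Set.mem_range, Fin.exists_fin_succ_pi]
    constructor
    · rintro ⟨y, rfl⟩
      fin_cases y <;> simp
    · rintro (rfl | rfl | rfl | rfl)
      exacts [⟨0, rfl⟩, ⟨1, rfl⟩, ⟨2, rfl⟩, ⟨3, rfl⟩]
  have hK' : K = convexHull ℝ (Set.range ![a, b, c, d]) := by rw [hK, hrange]
  apply csInf_le
  · exact ⟨0, fun γ hγ => hγ.1⟩
  · refine ⟨by norm_num, fun i => (1/4 : ℝ) • (![a, b, c, d] i), ?_⟩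
    rw [hK']
    exact simplex_cover ![a, b, c, d]
end

section
/- If n is odd and K is an n-dimensional simplex in ℝ^n, then Γ_{n+1}(K) ≤ n/(n+1). -/
open Set Pointwise

theorem covering_functional_odd_simplex {n : ℕ} (hodd : Odd n)
    (v : Fin (n + 1) → EuclideanSpace ℝ (Fin n)) (hind : AffineIndependent ℝ v)
    (K : Set (EuclideanSpace ℝ (Fin n)))
    (hK : K = convexHull ℝ (Set.range v)) :
    coveringFunctional K (n + 1) ≤ (n : ℝ) / (n + 1) := by
  have hn : 1 ≤ n := hodd.pos
  have hn1 : (0:ℝ) < (n:ℝ) + 1 := by positivity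
  set γ : ℝ := (n:ℝ) / (n+1) with hγdef
  have hγpos : 0 < γ := by
    apply div_pos
    · exact_mod_cast hn
    · exact hn1
  apply csInf_le
  · exact ⟨0, fun x hx => hx.1⟩
  refine ⟨le_of_lt hγpos, fun i => ((n:ℝ)+1)⁻¹ • v i, ?_⟩
  intro x hx
  rw [hK, convexHull_range_eq_exists_affineCombination] at hx
  obtain ⟨s, w, hw₀, hw₁, hwx⟩ := hx
  rw [Finset.affineCombination_eq_linear_combination s v w hw₁] at hwx
  -- extend weights to univ
  classical
  set W : Fin (n+1) → ℝ := fun j => if j ∈ s then w j else 0 with hW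
  have hW₀ : ∀ j, 0 ≤ W j := by
    intro j; simp only [hW]; split
    · exact hw₀ j ‹_›
    · exact le_refl 0
  have hWsum : ∑ j, W j = 1 := by
    rw [← hw₁]
    rw [Finset.sum_ite_mem, Finset.univ_inter]
  have hWx : ∑ j, W j • v j = x := by
    rw [← hwx]
    simp only [hW, ite_smul, zero_smul]
    rw [Finset.sum_ite_mem, Finset.univ_inter]
  -- find an index with large weight
  have hexists : ∃ i, ((n:ℝ)+1)⁻¹ ≤ W i := by
    by_contra h
    push_neg at h
    have : (1:ℝ) < 1 := by
      calc (1:ℝ) = ∑ j : Fin (n+1), W j := hWsum.symm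
        _ < ∑ j : Fin (n+1), ((n:ℝ)+1)⁻¹ :=
          Finset.sum_lt_sum_of_nonempty ⟨0, Finset.mem_univ 0⟩ (fun j _ => h j)
        _ = 1 := by
          rw [Finset.sum_const, Finset.card_univ, Fintype.card_fin, nsmul_eq_mul]
          push_cast
          field_simp
    exact lt_irrefl 1 this
  obtain ⟨i, hi⟩ := hexists
  rw [mem_iUnion]
  refine ⟨i, ?_⟩
  rw [Set.mem_vadd_set]
  -- construct point z in K
  set u : Fin (n+1) → ℝ := fun j => W j - if j = i then ((n:ℝ)+1)⁻¹ else 0 with hu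
  have hu₀ : ∀ j, 0 ≤ u j := by
    intro j; simp only [hu]; split
    · subst ‹j = i›; linarith
    · simpa using hW₀ j
  have husum : ∑ j, u j = γ := by
    simp only [hu]
    rw [Finset.sum_sub_distrib, hWsum, Finset.sum_ite_eq' Finset.univ i, if_pos (Finset.mem_univ i)]
    rw [hγdef]; field_simp
    ring
  set p : Fin (n+1) → ℝ := fun j => u j / γ with hp
  have hpsum : ∑ j, p j = 1 := by
    simp only [hp, ← Finset.sum_div, husum, div_self hγpos.ne']
  have hz : (∑ j, p j • v j) ∈ K := by
    rw [hK]
    have := affineCombination_mem_convexHull (s := (Finset.univ : Finset (Fin (n+1)))) (v := v)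
      (w := p) (fun j _ => div_nonneg (hu₀ j) hγpos.le) hpsum
    rwa [Finset.affineCombination_eq_linear_combination _ v p hpsum] at this
  refine ⟨γ • ∑ j, p j • v j, smul_mem_smul_set hz, ?_⟩
  rw [Finset.smul_sum]
  have : ∀ j, γ • (p j • v j) = u j • v j := by
    intro j
    rw [smul_smul]
    congr 1
    simp only [hp]
    field_simp
  simp_rw [this]
  simp only [hu, sub_smul, ite_smul, zero_smul]
  rw [Finset.sum_sub_distrib, hWx, Finset.sum_ite_eq' Finset.univ i, if_pos (Finset.mem_univ i)]
  simp [vadd_eq_add]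
end

section
/- Let K ∈ 𝒦³ be the convex hull of two parallelograms L and M with c(K) = 8 and suppose the extreme points of K are exactly the 8 vertices of L and M. Then every pair of these 8 extreme points is antipodal in K. -/
open Set Pointwise

/-- `c(K)`: the least number of smaller homothetic copies of `K` needed to cover `K`. -/
noncomputable def coveringNumber {n : ℕ} (K : Set (EuclideanSpace ℝ (Fin n))) : ℕ :=
  sInf {m : ℕ | ∃ (x : Fin m → EuclideanSpace ℝ (Fin n)) (l : Fin m → ℝ),
    (∀ i, l i ∈ Set.Ioo (0 : ℝ) 1) ∧ K ⊆ ⋃ i, x i +ᵥ l i • K}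

/-- A (possibly non-coordinate-planar) parallelogram in Euclidean space. -/
def IsParallelogram {n : ℕ} (L : Set (EuclideanSpace ℝ (Fin n))) : Prop :=
  ∃ (c u v : EuclideanSpace ℝ (Fin n)), LinearIndependent ℝ ![u, v] ∧
    L = (fun p : ℝ × ℝ => c + p.1 • u + p.2 • v) '' (Set.Icc 0 1 ×ˢ Set.Icc 0 1)

section Helpers

variable {n : ℕ}

local notation "E" => EuclideanSpace ℝ (Fin n)

lemma isParallelogram_eq_hull {L : Set E} (hL : IsParallelogram L) :
    ∃ g : Fin 4 → E, L = convexHull ℝ (Set.range g) := by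
  obtain ⟨c, u, v, -, rfl⟩ := hL
  refine ⟨![c, c + u, c + v, c + u + v], Set.Subset.antisymm ?_ ?_⟩
  · rintro x ⟨⟨p, q⟩, ⟨⟨hp0, hp1⟩, hq0, hq1⟩, rfl⟩
    set w : Fin 4 → ℝ := ![(1-p)*(1-q), p*(1-q), (1-p)*q, p*q] with hw
    have hw1 : ∑ i, w i = 1 := by simp [hw, Fin.sum_univ_four]; ring
    have hmem := Finset.centerMass_mem_convexHull (Finset.univ (α := Fin 4))
      (w := w) (z := ![c, c + u, c + v, c + u + v])
      (fun i _ => by fin_cases i <;> simp [hw] <;> nlinarith)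
      (by rw [hw1]; norm_num) (fun i _ => Set.mem_range_self i)
    have hcm : Finset.univ.centerMass w ![c, c + u, c + v, c + u + v]
        = c + p • u + q • v := by
      rw [Finset.centerMass_eq_of_sum_1 _ _ hw1]
      simp [hw, Fin.sum_univ_four]
      module
    rwa [hcm] at hmem
  · have hlin : Convex ℝ ((fun p : ℝ × ℝ => c + p.1 • u + p.2 • v) ''
        (Set.Icc 0 1 ×ˢ Set.Icc 0 1)) := by
      have h2 : Convex ℝ (Set.Icc (0:ℝ) 1 ×ˢ Set.Icc (0:ℝ) 1) :=
        (convex_Icc _ _).prod (convex_Icc _ _)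
      have h3 := (h2.linear_image
        ((LinearMap.fst ℝ ℝ ℝ).smulRight u + (LinearMap.snd ℝ ℝ ℝ).smulRight v)).translate c
      rw [← Set.image_comp] at h3
      convert h3 using 2 with p
      simp [add_assoc]
      · rfl
      · simp [add_assoc]
    refine convexHull_min ?_ hlin
    rintro x ⟨i, rfl⟩
    fin_cases i
    · exact ⟨(0,0), by norm_num [Prod.le_def], by simp⟩
    · exact ⟨(1,0), by norm_num [Prod.le_def], by simp⟩
    · exact ⟨(0,1), by norm_num [Prod.le_def], by simp⟩
    · exact ⟨(1,1), by norm_num [Prod.le_def], by simp⟩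

lemma corner_cover {t : Finset (EuclideanSpace ℝ (Fin n))} (hcard : t.card ≤ 8)
    {K : Set E} (hKt : K = convexHull ℝ (t : Set E)) {x : E} (hx : x ∈ K) :
    ∃ y ∈ t, x ∈ ((1/8 : ℝ) • y) +ᵥ (7/8 : ℝ) • K := by
  classical
  rw [hKt, Finset.convexHull_eq] at hx
  obtain ⟨w, hw0, hw1, hcm⟩ := hx
  have htne : t.Nonempty := by
    rcases Finset.eq_empty_or_nonempty t with h | h
    · subst h; simp at hw1
    · exact h
  obtain ⟨y, hyt, hwy⟩ : ∃ y ∈ t, (1/8 : ℝ) ≤ w y := by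
    by_contra h
    push_neg at h
    have hlt := Finset.sum_lt_sum_of_nonempty htne h
    rw [hw1, Finset.sum_const, nsmul_eq_mul] at hlt
    have hc8 : (t.card : ℝ) ≤ 8 := by exact_mod_cast hcard
    nlinarith
  set w' : EuclideanSpace ℝ (Fin n) → ℝ :=
    fun z => (8/7 : ℝ) * w z - (if z = y then (1/7 : ℝ) else 0) with hw'
  have hw'0 : ∀ z ∈ t, 0 ≤ w' z := by
    intro z hz
    by_cases hzy : z = y
    · subst hzy; simp only [hw', if_pos rfl, if_true]; nlinarith
    · simp only [hw', if_neg hzy]; nlinarith [hw0 z hz]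
  have hw'1 : ∑ z ∈ t, w' z = 1 := by
    simp only [hw', Finset.sum_sub_distrib, ← Finset.mul_sum, hw1,
      Finset.sum_ite_eq', hyt, if_true]
    norm_num
  have hmem : t.centerMass w' id ∈ convexHull ℝ (t : Set E) :=
    Finset.centerMass_mem_convexHull t hw'0 (by rw [hw'1]; norm_num)
      (fun i hi => Finset.mem_coe.2 hi)
  have hx0 : ∑ z ∈ t, w z • z = x := by
    have := Finset.centerMass_eq_of_sum_1 t id hw1
    simp only [id] at this
    rw [← this]; exact hcm
  have hcm' : t.centerMass w' id = (8/7 : ℝ) • x - (1/7 : ℝ) • y := by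
    rw [Finset.centerMass_eq_of_sum_1 t id hw'1]
    simp only [hw', sub_smul, mul_smul, ite_smul, zero_smul, id,
      Finset.sum_sub_distrib]
    rw [← Finset.smul_sum, hx0, Finset.sum_ite_eq', if_pos hyt]
  refine ⟨y, hyt, ?_⟩
  rw [Set.mem_vadd_set]
  refine ⟨(7/8 : ℝ) • (t.centerMass w' id),
    Set.smul_mem_smul_set (by rw [hKt]; exact hmem), ?_⟩
  rw [hcm']
  show (1/8:ℝ) • y + ((7/8:ℝ) • ((8/7 : ℝ) • x - (1/7 : ℝ) • y)) = x
  module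

lemma mem_big_homothet {K : Set E} (hK : Convex ℝ K) {η : ℝ} (hη : 0 < η)
    {c k z x : EuclideanSpace ℝ (Fin n)} (hc : c ∈ K) (hk : k ∈ K)
    (hx : x = z + η • c + (7/8 : ℝ) • k) :
    x ∈ z +ᵥ (η + 7/8 : ℝ) • K := by
  have hμ : 0 < η + 7/8 := by linarith
  have hmem : (η / (η + 7/8)) • c + ((7/8 : ℝ) / (η + 7/8)) • k ∈ K :=
    hK hc hk (by positivity) (by positivity) (by field_simp)
  rw [Set.mem_vadd_set]
  refine ⟨(η + 7/8 : ℝ) • ((η / (η + 7/8)) • c + ((7/8 : ℝ) / (η + 7/8)) • k),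
    Set.smul_mem_smul_set hmem, ?_⟩
  have h1 : (η + 7/8) * (η / (η + 7/8)) = η := by field_simp
  have h2 : (η + 7/8) * ((7/8 : ℝ) / (η + 7/8)) = 7/8 := by field_simp
  show z + ((η + 7/8 : ℝ) • ((η / (η + 7/8)) • c + ((7/8 : ℝ) / (η + 7/8)) • k)) = x
  rw [smul_add, smul_smul, smul_smul, h1, h2, hx]
  abel

end Helpers

theorem extremePoints_pairwise_antipodal
    (L M : Set (EuclideanSpace ℝ (Fin 3)))
    (hL : IsParallelogram L) (hM : IsParallelogram M)
    (K : Set (EuclideanSpace ℝ (Fin 3)))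
    (hK : K = convexHull ℝ (L ∪ M))
    (hKbody : (interior K).Nonempty)
    (hc : coveringNumber K = 8)
    (hE : Set.extremePoints ℝ K = Set.extremePoints ℝ L ∪ Set.extremePoints ℝ M)
    (hcard : (Set.extremePoints ℝ K).ncard = 8) :
    ∀ a ∈ Set.extremePoints ℝ K, ∀ b ∈ Set.extremePoints ℝ K, a ≠ b →
      AntipodalPair K a b := by
  intro a ha b hb hab
  have hKconv : Convex ℝ K := by rw [hK]; exact convex_convexHull ℝ _
  have haK : a ∈ K := ha.1
  have hbK : b ∈ K := hb.1
  by_cases hint : a - b ∈ interior (K - K)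
  · -- non-antipodal direction impossible: construct a 7-cover, contradicting c(K) = 8
    exfalso
    classical
    obtain ⟨gL, hLg⟩ := isParallelogram_eq_hull hL
    obtain ⟨gM, hMg⟩ := isParallelogram_eq_hull hM
    set s8 : Fin 8 → EuclideanSpace ℝ (Fin 3) :=
      fun i => if h : (i : ℕ) < 4 then gL ⟨i, h⟩ else gM ⟨(i : ℕ) - 4, by omega⟩ with hs8
    have hrange : Set.range s8 = Set.range gL ∪ Set.range gM := by
      ext x
      constructor
      · rintro ⟨i, rfl⟩
        by_cases h : (i : ℕ) < 4
        · exact Or.inl ⟨⟨i, h⟩, by simp [hs8, h]⟩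
        · exact Or.inr ⟨⟨(i:ℕ) - 4, by omega⟩, by simp [hs8, h]⟩
      · rintro (⟨j, rfl⟩ | ⟨j, rfl⟩)
        · refine ⟨⟨(j:ℕ), by omega⟩, ?_⟩
          simp [hs8, j.isLt]
        · refine ⟨⟨(j:ℕ) + 4, by omega⟩, ?_⟩
          have h4 : ¬ ((j:ℕ) + 4 < 4) := by omega
          simp [hs8, h4]
    have hKs : K = convexHull ℝ (Set.range s8) := by
      rw [hK, hrange, hLg, hMg, convexHull_convexHull_union_left,
        convexHull_convexHull_union_right]
    have ha8 : a ∈ Set.range s8 := by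
      rw [hrange]; rw [hE] at ha
      rcases ha with h | h
      · exact Or.inl (by rw [hLg] at h; exact extremePoints_convexHull_subset h)
      · exact Or.inr (by rw [hMg] at h; exact extremePoints_convexHull_subset h)
    have hb8 : b ∈ Set.range s8 := by
      rw [hrange]; rw [hE] at hb
      rcases hb with h | h
      · exact Or.inl (by rw [hLg] at h; exact extremePoints_convexHull_subset h)
      · exact Or.inr (by rw [hMg] at h; exact extremePoints_convexHull_subset h)
    obtain ⟨ia, hia⟩ := ha8
    obtain ⟨ib, hib⟩ := hb8
    have hiaib : ia ≠ ib := by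
      rintro rfl
      exact hab (hia ▸ hib ▸ rfl)
    obtain ⟨ε, hε, hball⟩ := Metric.isOpen_iff.1 isOpen_interior _ hint
    have hone : a - b ≠ 0 := sub_ne_zero.2 hab
    have hnorm : 0 < ‖a - b‖ := norm_pos_iff.2 hone
    set δ : ℝ := ε / (2 * ‖a - b‖) with hδdef
    have hδ : 0 < δ := by positivity
    have hmemball : (1 + δ) • (a - b) ∈ K - K := by
      apply interior_subset
      apply hball
      rw [Metric.mem_ball, dist_eq_norm]
      have heq : (1 + δ) • (a - b) - (a - b) = δ • (a - b) := by module
      rw [heq, norm_smul, Real.norm_eq_abs, abs_of_pos hδ]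
      have hhalf : δ * ‖a - b‖ = ε / 2 := by
        rw [hδdef]; field_simp
      rw [hhalf]; linarith
    obtain ⟨p, hpK, q, hqK, hpq⟩ := Set.mem_sub.1 hmemball
    set η : ℝ := (1/8) / (1 + δ) with hηdef
    have hηpos : 0 < η := by positivity
    have hηlt : η < 1/8 := by
      rw [hηdef]
      exact div_lt_self (by norm_num) (by linarith)
    set z : EuclideanSpace ℝ (Fin 3) := (1/8 : ℝ) • a - η • p with hzdef
    set μ : ℝ := η + 7/8 with hμdef
    set X : Fin 8 → EuclideanSpace ℝ (Fin 3) :=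
      fun i => if i = ia ∨ i = ib then z else (1/8 : ℝ) • (s8 i) with hX
    set lam : Fin 8 → ℝ := fun i => if i = ia ∨ i = ib then μ else 7/8 with hlam
    set t : Finset (EuclideanSpace ℝ (Fin 3)) := Finset.image s8 Finset.univ with ht
    have htcoe : (t : Set (EuclideanSpace ℝ (Fin 3))) = Set.range s8 := by
      simp [ht]
    have hKt : K = convexHull ℝ (t : Set (EuclideanSpace ℝ (Fin 3))) := by
      rw [htcoe]; exact hKs
    have htcard : t.card ≤ 8 := le_trans Finset.card_image_le (by simp)
    have key : η • (p - q) = (1/8 : ℝ) • a - (1/8 : ℝ) • b := by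
      rw [hpq, smul_smul, ← smul_sub]
      congr 1
      rw [hηdef]; field_simp
    have hcover : K ⊆ ⋃ i, X i +ᵥ lam i • K := by
      intro x hx
      obtain ⟨y, hyt, hymem⟩ := corner_cover htcard hKt hx
      rw [Set.mem_vadd_set] at hymem
      obtain ⟨m, hm, hmx⟩ := hymem
      obtain ⟨k, hkK, rfl⟩ := hm
      rw [vadd_eq_add] at hmx
      by_cases hya : y = a
      · refine Set.mem_iUnion.2 ⟨ia, ?_⟩
        have hXi : X ia = z := by simp [hX]
        have hli : lam ia = μ := by simp [hlam]
        rw [hXi, hli, hμdef]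
        refine mem_big_homothet hKconv hηpos hpK hkK ?_
        subst hya
        calc x = (1/8:ℝ) • y + (7/8:ℝ) • k := hmx.symm
        _ = ((1/8 : ℝ) • y - η • p) + η • p + (7/8:ℝ) • k := by module
        _ = z + η • p + (7/8:ℝ) • k := by rw [hzdef]
      · by_cases hyb : y = b
        · refine Set.mem_iUnion.2 ⟨ib, ?_⟩
          have hXi : X ib = z := by simp [hX]
          have hli : lam ib = μ := by simp [hlam]
          rw [hXi, hli, hμdef]
          refine mem_big_homothet hKconv hηpos hqK hkK ?_
          have key' : η • p - η • q = (1/8:ℝ) • a - (1/8:ℝ) • b := by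
            rw [← smul_sub]; exact key
          have hzq : z + η • q = (1/8:ℝ) • b := by
            calc z + η • q = (1/8:ℝ) • a - (η • p - η • q) := by rw [hzdef]; module
            _ = (1/8:ℝ) • a - ((1/8:ℝ) • a - (1/8:ℝ) • b) := by rw [key']
            _ = (1/8:ℝ) • b := by module
          subst hyb
          calc x = (1/8:ℝ) • y + (7/8:ℝ) • k := hmx.symm
          _ = (z + η • q) + (7/8:ℝ) • k := by rw [hzq]
          _ = z + η • q + (7/8:ℝ) • k := by rw [add_assoc]
        · have hyr : y ∈ Set.range s8 := by
            rw [← htcoe]; exact Finset.mem_coe.2 hyt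
          obtain ⟨i, hi⟩ := hyr
          have hine : ¬ (i = ia ∨ i = ib) := by
            rintro (rfl | rfl)
            · exact hya (by rw [← hi, hia])
            · exact hyb (by rw [← hi, hib])
          refine Set.mem_iUnion.2 ⟨i, ?_⟩
          have hXi : X i = (1/8:ℝ) • y := by simp only [hX, if_neg hine, hi]
          have hli : lam i = 7/8 := by simp only [hlam, if_neg hine]
          rw [hXi, hli, Set.mem_vadd_set]
          exact ⟨(7/8:ℝ) • k, Set.smul_mem_smul_set hkK, hmx⟩
    have h7 : 7 ∈ {m : ℕ | ∃ (x : Fin m → EuclideanSpace ℝ (Fin 3)) (l : Fin m → ℝ),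
        (∀ i, l i ∈ Set.Ioo (0 : ℝ) 1) ∧ K ⊆ ⋃ i, x i +ᵥ l i • K} := by
      refine ⟨X ∘ ib.succAbove, lam ∘ ib.succAbove, ?_, ?_⟩
      · intro j
        simp only [Function.comp_apply, hlam]
        by_cases hcond : ib.succAbove j = ia ∨ ib.succAbove j = ib
        · rw [if_pos hcond]
          exact ⟨by rw [hμdef]; linarith, by rw [hμdef]; linarith⟩
        · rw [if_neg hcond]
          constructor <;> norm_num
      · intro x hx
        obtain ⟨i, hxi⟩ := Set.mem_iUnion.1 (hcover hx)
        by_cases hiib : i = ib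
        · subst hiib
          obtain ⟨j, hj⟩ := Fin.exists_succAbove_eq hiaib
          refine Set.mem_iUnion.2 ⟨j, ?_⟩
          simp only [Function.comp_apply, hj]
          have hXX : X ia = X i := by simp [hX]
          have hll : lam ia = lam i := by simp [hlam]
          rw [hXX, hll]
          exact hxi
        · obtain ⟨j, hj⟩ := Fin.exists_succAbove_eq hiib
          refine Set.mem_iUnion.2 ⟨j, ?_⟩
          simpa only [Function.comp_apply, hj] using hxi
    have hle : coveringNumber K ≤ 7 := Nat.sInf_le h7
    omega
  · -- Hahn–Banach: separate `a - b` from the interior of `K - K`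
    obtain ⟨w₀, hw₀⟩ := hKbody
    have hsubconv : Convex ℝ (K - K) := hKconv.sub hKconv
    have h0 : (0 : EuclideanSpace ℝ (Fin 3)) ∈ interior (K - K) := by
      have hsub : (-w₀) +ᵥ K ⊆ K - K := by
        rintro _ ⟨y, hy, rfl⟩
        have := Set.sub_mem_sub hy (interior_subset hw₀)
        simpa [vadd_eq_add, neg_add_eq_sub] using this
      have h0m : (0 : EuclideanSpace ℝ (Fin 3)) ∈ interior ((-w₀) +ᵥ K) := by
        rw [interior_vadd]
        exact ⟨w₀, hw₀, by simp⟩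
      exact interior_mono hsub h0m
    obtain ⟨f, hf⟩ := geometric_hahn_banach_open_point hsubconv.interior isOpen_interior hint
    have hfab : 0 < f (a - b) := by simpa using hf 0 h0
    have hbound : ∀ u ∈ K - K, f u ≤ f (a - b) := by
      intro u hu
      by_contra hlt
      push_neg at hlt
      have hfz : 0 < f u := lt_trans hfab hlt
      set α : ℝ := (f (a - b) / f u + 1) / 2 with hα
      have hα0 : 0 ≤ α := by positivity
      have hα1 : α < 1 := by
        have hd : f (a - b) / f u < 1 := (div_lt_one hfz).2 hlt
        rw [hα]; linarith
      have hmem : α • u + (1 - α) • (0 : EuclideanSpace ℝ (Fin 3)) ∈ interior (K - K) :=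
        hsubconv.combo_closure_interior_mem_interior (subset_closure hu) h0 hα0
          (by linarith) (by ring)
      have hlt2 := hf _ hmem
      rw [smul_zero, add_zero, map_smul, smul_eq_mul] at hlt2
      have hαfz : α * f u = (f (a - b) + f u) / 2 := by
        rw [hα]; field_simp
      rw [hαfz] at hlt2; linarith
    have hba : f b < f a := by
      have h := hfab; rw [map_sub] at h; linarith
    refine ⟨f.toLinearMap, ?_, ?_, ?_⟩
    · intro hzero
      have hz : f (a - b) = 0 := by
        have : f.toLinearMap (a - b) = 0 := by rw [hzero]; rfl
        exact this
      linarith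
    · show f a ≠ f b
      exact ne_of_gt hba
    · intro x hxK
      have h1 : f x ≤ f a := by
        have h := hbound (x - b) (Set.sub_mem_sub hxK hbK)
        rw [map_sub, map_sub] at h; linarith
      have h2 : f b ≤ f x := by
        have h := hbound (a - x) (Set.sub_mem_sub haK hxK)
        rw [map_sub, map_sub] at h; linarith
      constructor
      · show min (f a) (f b) ≤ f x
        exact le_trans (min_le_right _ _) h2
      · show f x ≤ max (f a) (f b)
        exact le_trans h1 (le_max_left _ _)
end
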